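/- Let N ≥ 2, let n₀, k ∈ ℝ, ρ > 0, and a ∈ EuclideanSpace ℝ (Fin N). Let V ⊆ EuclideanSpace ℝ (Fin N) be open and let Ψ be twice continuously differentiable on V with Δ Ψ(y) + (4 n₀² k² ρ⁴/(‖y‖² + ρ²)²) · Ψ(y) = 0 for all y ∈ V. Define I_a(r) = ((ρ² + ‖a‖²)/‖r − a‖²)·(r − a) + a and Φ(r) = ‖r − a‖^{−(N−2)} · Ψ(I_a(r)). Then for every r ≠ a with I_a(r) ∈ V one has Δ Φ(r) + (4 n₀² k² ρ⁴/(‖r‖² + ρ²)²) · Φ(r) = 0. -/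

import Mathlib

set_option maxHeartbeats 2000000
open RealInnerProductSpace

namespace FisheyeAux

variable {N : ℕ}

noncomputable def q (a x : EuclideanSpace ℝ (Fin N)) : ℝ := ⟪x - a, x - a⟫

noncomputable def Inv (a : EuclideanSpace ℝ (Fin N)) (R2 : ℝ) (x : EuclideanSpace ℝ (Fin N)) :
    EuclideanSpace ℝ (Fin N) := (R2 / q a x) • (x - a) + a

noncomputable def qD (a x : EuclideanSpace ℝ (Fin N)) :
    EuclideanSpace ℝ (Fin N) →L[ℝ] ℝ := (2:ℝ) • innerSL ℝ (x - a)

noncomputable def iD (a : EuclideanSpace ℝ (Fin N)) (R2 : ℝ) (x : EuclideanSpace ℝ (Fin N)) :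
    EuclideanSpace ℝ (Fin N) →L[ℝ] EuclideanSpace ℝ (Fin N) :=
  (R2 / q a x) • ContinuousLinearMap.id ℝ _
    - (2 * R2 / (q a x)^2) • ((innerSL ℝ (x - a)).smulRight (x - a))

@[simp] lemma qD_apply (a x v : EuclideanSpace ℝ (Fin N)) :
    qD a x v = 2 * ⟪x - a, v⟫ := by
  simp only [qD, ContinuousLinearMap.smul_apply, innerSL_apply_apply, smul_eq_mul]

@[simp] lemma iD_apply (a : EuclideanSpace ℝ (Fin N)) (R2 : ℝ)
    (x v : EuclideanSpace ℝ (Fin N)) :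
    iD a R2 x v = (R2 / q a x) • v - (2 * R2 / (q a x)^2 * ⟪x - a, v⟫) • (x - a) := by
  simp only [iD, ContinuousLinearMap.sub_apply, ContinuousLinearMap.smul_apply,
    ContinuousLinearMap.coe_id', id_eq, ContinuousLinearMap.smulRight_apply,
    innerSL_apply_apply, smul_smul]

lemma q_eq (a x : EuclideanSpace ℝ (Fin N)) : q a x = ‖x - a‖^2 :=
  real_inner_self_eq_norm_sq _

lemma q_pos {a x : EuclideanSpace ℝ (Fin N)} (hx : x ≠ a) : 0 < q a x := by
  rw [q_eq]
  exact pow_pos (norm_pos_iff.mpr (sub_ne_zero.mpr hx)) 2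

lemma hasFDerivAt_q (a x : EuclideanSpace ℝ (Fin N)) :
    HasFDerivAt (q a) (qD a x) x := by
  have h := ((hasFDerivAt_id x).sub_const a).inner ℝ ((hasFDerivAt_id x).sub_const a)
  refine h.congr_fderiv ?_
  ext v
  simp only [qD, ContinuousLinearMap.smul_apply, innerSL_apply_apply,
    ContinuousLinearMap.comp_apply, fderivInnerCLM_apply, ContinuousLinearMap.prod_apply,
    ContinuousLinearMap.coe_id', id_eq, smul_eq_mul]
  rw [real_inner_comm v]
  ring

lemma contDiff_q (a : EuclideanSpace ℝ (Fin N)) : ContDiff ℝ ⊤ (q a) :=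
  (contDiff_id.sub contDiff_const).inner ℝ (contDiff_id.sub contDiff_const)

lemma hasFDerivAt_c (a : EuclideanSpace ℝ (Fin N)) (R2 : ℝ)
    {x : EuclideanSpace ℝ (Fin N)} (hx : x ≠ a) :
    HasFDerivAt (fun x => R2 / q a x) ((-(R2 / (q a x)^2)) • qD a x) x := by
  have hq := hasFDerivAt_q a x
  have hqne : q a x ≠ 0 := ne_of_gt (q_pos hx)
  have h1 : HasFDerivAt (fun x => (q a x)⁻¹) ((-((q a x) ^ 2)⁻¹) • qD a x) x :=
    (hasDerivAt_inv hqne).comp_hasFDerivAt x hq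
  have h2 := h1.const_mul R2
  refine h2.congr_fderiv ?_
  ext v
  simp only [ContinuousLinearMap.smul_apply, qD_apply, smul_eq_mul]
  field_simp

lemma hasFDerivAt_Inv (a : EuclideanSpace ℝ (Fin N)) (R2 : ℝ)
    {x : EuclideanSpace ℝ (Fin N)} (hx : x ≠ a) :
    HasFDerivAt (Inv a R2) (iD a R2 x) x := by
  have h := ((hasFDerivAt_c a R2 hx).smul ((hasFDerivAt_id x).sub_const a)).add_const a
  refine h.congr_fderiv ?_
  refine ContinuousLinearMap.ext fun v => ?_
  simp only [iD_apply, ContinuousLinearMap.add_apply, ContinuousLinearMap.smul_apply,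
    ContinuousLinearMap.coe_id', id_eq, ContinuousLinearMap.smulRight_apply, qD_apply,
    smul_eq_mul]
  rw [sub_eq_add_neg ((R2 / q a x) • v), ← neg_smul]
  ring_nf

lemma hasFDerivAt_rpow_q (a : EuclideanSpace ℝ (Fin N)) (α : ℝ)
    {x : EuclideanSpace ℝ (Fin N)} (hx : x ≠ a) :
    HasFDerivAt (fun x => q a x ^ α) ((α * q a x ^ (α - 1)) • qD a x) x :=
  (hasFDerivAt_q a x).rpow_const (Or.inl (ne_of_gt (q_pos hx)))

lemma hasFDerivAt_ip (a v : EuclideanSpace ℝ (Fin N)) (x : EuclideanSpace ℝ (Fin N)) :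
    HasFDerivAt (fun x' => (⟪x' - a, v⟫ : ℝ)) (innerSL ℝ v) x := by
  have h := ((hasFDerivAt_id x).sub_const a).inner ℝ (hasFDerivAt_const v x)
  refine h.congr_fderiv ?_
  ext t
  simp only [innerSL_apply_apply, ContinuousLinearMap.comp_apply, fderivInnerCLM_apply,
    ContinuousLinearMap.prod_apply, ContinuousLinearMap.coe_id', id_eq,
    ContinuousLinearMap.zero_apply]
  rw [real_inner_comm]
  simp
  exact real_inner_comm _ _

noncomputable def Kd (a : EuclideanSpace ℝ (Fin N)) (R2 α : ℝ)
    (Ψ : EuclideanSpace ℝ (Fin N) → ℝ) (x : EuclideanSpace ℝ (Fin N)) :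
    EuclideanSpace ℝ (Fin N) →L[ℝ] ℝ :=
  (q a x ^ α) • ((fderiv ℝ Ψ (Inv a R2 x)).comp (iD a R2 x))
    + (Ψ (Inv a R2 x) * (α * q a x ^ (α - 1))) • qD a x

lemma Kd_apply (a : EuclideanSpace ℝ (Fin N)) (R2 α : ℝ)
    (Ψ : EuclideanSpace ℝ (Fin N) → ℝ) (x v : EuclideanSpace ℝ (Fin N)) :
    Kd a R2 α Ψ x v = q a x ^ α * (fderiv ℝ Ψ (Inv a R2 x)) (iD a R2 x v)
      + Ψ (Inv a R2 x) * (α * q a x ^ (α - 1)) * (2 * ⟪x - a, v⟫) := by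
  simp only [Kd, ContinuousLinearMap.add_apply, ContinuousLinearMap.smul_apply,
    ContinuousLinearMap.comp_apply, qD_apply, smul_eq_mul]

lemma hasFDerivAt_K (a : EuclideanSpace ℝ (Fin N)) (R2 α : ℝ)
    (Ψ : EuclideanSpace ℝ (Fin N) → ℝ) {x : EuclideanSpace ℝ (Fin N)} (hx : x ≠ a)
    (hd : DifferentiableAt ℝ Ψ (Inv a R2 x)) :
    HasFDerivAt (fun x => q a x ^ α * Ψ (Inv a R2 x)) (Kd a R2 α Ψ x) x := by
  have h2 : HasFDerivAt (fun x' => Ψ (Inv a R2 x'))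
      ((fderiv ℝ Ψ (Inv a R2 x)).comp (iD a R2 x)) x :=
    hd.hasFDerivAt.comp x (hasFDerivAt_Inv a R2 hx)
  have h := (hasFDerivAt_rpow_q a α hx).mul h2
  refine h.congr_fderiv ?_
  ext v
  simp only [Kd, ContinuousLinearMap.add_apply, ContinuousLinearMap.smul_apply,
    ContinuousLinearMap.comp_apply, qD_apply, smul_eq_mul]
  ring

lemma fderiv_Kd_apply (a : EuclideanSpace ℝ (Fin N)) (R2 α : ℝ)
    (Ψ : EuclideanSpace ℝ (Fin N) → ℝ) {x : EuclideanSpace ℝ (Fin N)} (hx : x ≠ a)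
    (hΨd : DifferentiableAt ℝ Ψ (Inv a R2 x))
    (hm : DifferentiableAt ℝ (fderiv ℝ Ψ) (Inv a R2 x))
    (v : EuclideanSpace ℝ (Fin N)) :
    fderiv ℝ (fun x' => Kd a R2 α Ψ x' v) x v =
      Ψ (Inv a R2 x) * (4*α*(α-1) * (q a x ^ α) / (q a x)^2 * ⟪x - a, v⟫^2
          + 2*α*(q a x ^ α / q a x) * ⟪v, v⟫)
      + 4*α*(q a x ^ α / q a x)*⟪x - a, v⟫*( (R2/q a x) * (fderiv ℝ Ψ (Inv a R2 x)) v
          - (2*R2/(q a x)^2*⟪x - a, v⟫) * (fderiv ℝ Ψ (Inv a R2 x)) (x - a) )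
      + (q a x ^ α) * ( (R2/q a x)^2 * (fderiv ℝ (fderiv ℝ Ψ) (Inv a R2 x) v) v
          - (R2/q a x)*(2*R2/(q a x)^2*⟪x - a, v⟫) *
              ((fderiv ℝ (fderiv ℝ Ψ) (Inv a R2 x) v) (x - a)
                + (fderiv ℝ (fderiv ℝ Ψ) (Inv a R2 x) (x - a)) v)
          + (2*R2/(q a x)^2*⟪x - a, v⟫)^2 * (fderiv ℝ (fderiv ℝ Ψ) (Inv a R2 x) (x - a)) (x - a)
          - (4*R2/(q a x)^2*⟪x - a, v⟫) * (fderiv ℝ Ψ (Inv a R2 x)) v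
          + (8*R2/(q a x)^3*⟪x - a, v⟫^2 - 2*R2/(q a x)^2*⟪v,v⟫) * (fderiv ℝ Ψ (Inv a R2 x)) (x - a) ) := by
  have hQ : q a x ≠ 0 := ne_of_gt (q_pos hx)
  have hq := hasFDerivAt_q a x
  have hinv := hasFDerivAt_Inv a R2 hx
  have hip := hasFDerivAt_ip a v x
  have hΨI : HasFDerivAt (fun x' => Ψ (Inv a R2 x'))
      ((fderiv ℝ Ψ (Inv a R2 x)).comp (iD a R2 x)) x :=
    hΨd.hasFDerivAt.comp x hinv
  have hmI : HasFDerivAt (fun x' => fderiv ℝ Ψ (Inv a R2 x'))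
      ((fderiv ℝ (fderiv ℝ Ψ) (Inv a R2 x)).comp (iD a R2 x)) x :=
    hm.hasFDerivAt.comp x hinv
  have hq2 : HasFDerivAt (fun x' => (q a x')^2) ((2 * q a x) • qD a x) x := by
    have h : (fun x' : EuclideanSpace ℝ (Fin N) => (q a x')^2)
        = fun x' => q a x' * q a x' := by
      funext x'; ring
    rw [h]
    have h2 := hq.mul hq
    refine h2.congr_fderiv ?_
    ext t
    simp only [ContinuousLinearMap.smul_apply, ContinuousLinearMap.add_apply, qD_apply,
      smul_eq_mul]
    ring
  have hinv2 : HasFDerivAt (fun x' => ((q a x')^2)⁻¹)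
      ((-(2 * q a x) / (q a x)^4) • qD a x) x := by
    have h := (hasDerivAt_inv (pow_ne_zero 2 hQ)).comp_hasFDerivAt x hq2
    refine h.congr_fderiv ?_
    ext t
    simp only [ContinuousLinearMap.smul_apply, qD_apply, smul_eq_mul]
    rw [show ((q a x ^ 2 : ℝ)^2) = q a x ^ 4 by ring]
    ring
  have hσ0 : HasFDerivAt (fun x' => 2 * R2 / (q a x')^2)
      ((2 * R2) • ((-(2 * q a x) / (q a x)^4) • qD a x)) x := by
    have h : (fun x' : EuclideanSpace ℝ (Fin N) => 2 * R2 / (q a x')^2)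
        = fun x' => 2 * R2 * ((q a x')^2)⁻¹ := by
      funext x'; rw [div_eq_mul_inv]
    rw [h]
    exact hinv2.const_mul (2 * R2)
  have hid : HasFDerivAt (fun y : EuclideanSpace ℝ (Fin N) => y - a)
      (ContinuousLinearMap.id ℝ _) x := (hasFDerivAt_id x).sub_const a
  have hσ := hσ0.mul hip
  have hw1 := (hasFDerivAt_c a R2 hx).smul_const v
  have hw2 := hσ.smul hid
  have hw := hw1.sub hw2
  have hA2 := hmI.clm_apply hw
  have hA1 := hasFDerivAt_rpow_q a α hx
  have hαq := (hasFDerivAt_rpow_q a (α - 1) hx).const_mul α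
  have hip2 := hip.const_mul (2:ℝ)
  have htop := (hA1.mul hA2).add ((hΨI.mul hαq).mul hip2)
  have hfun : (fun x' => Kd a R2 α Ψ x' v) = (fun x' =>
      q a x' ^ α * (fderiv ℝ Ψ (Inv a R2 x'))
        ((R2 / q a x') • v - (2 * R2 / (q a x')^2 * ⟪x' - a, v⟫) • (x' - a))
      + Ψ (Inv a R2 x') * (α * q a x' ^ (α - 1)) * (2 * ⟪x' - a, v⟫)) := by
    funext x'
    rw [Kd_apply, iD_apply]
  rw [hfun]
  erw [htop.fderiv]
  have e1 : q a x ^ (α - 1) = q a x ^ α / q a x := by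
    rw [Real.rpow_sub (q_pos hx), Real.rpow_one]
  have e2 : q a x ^ (α - 1 - 1) = q a x ^ α / q a x / q a x := by
    rw [Real.rpow_sub (q_pos hx), Real.rpow_sub (q_pos hx), Real.rpow_one]
  simp only [ContinuousLinearMap.add_apply, ContinuousLinearMap.sub_apply,
    ContinuousLinearMap.smul_apply, ContinuousLinearMap.comp_apply,
    ContinuousLinearMap.flip_apply, ContinuousLinearMap.smulRight_apply,
    ContinuousLinearMap.coe_id', id_eq, innerSL_apply_apply, qD_apply, iD_apply,
    map_sub, map_smul, smul_eq_mul, e1, e2, Pi.mul_apply, Pi.sub_apply, Pi.smul_apply']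
  rw [real_inner_comm v (x - a)]
  field_simp
  simp only [map_add, map_sub, map_smul, smul_eq_mul]
  field_simp
  ring

lemma inner_single (u : EuclideanSpace ℝ (Fin N)) (i : Fin N) :
    (⟪u, EuclideanSpace.single i 1⟫ : ℝ) = u i := by
  rw [EuclideanSpace.inner_single_right]
  simp

lemma decomp (u : EuclideanSpace ℝ (Fin N)) :
    ∑ i, (⟪u, EuclideanSpace.single i 1⟫ : ℝ) • (EuclideanSpace.single i 1 :
      EuclideanSpace ℝ (Fin N)) = u := by
  have h := (EuclideanSpace.basisFun (Fin N) ℝ).sum_repr u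
  simp only [EuclideanSpace.basisFun_apply, EuclideanSpace.basisFun_repr] at h
  simpa only [inner_single] using h

lemma sum_inner_apply (u : EuclideanSpace ℝ (Fin N)) (G : EuclideanSpace ℝ (Fin N) →L[ℝ] ℝ) :
    ∑ i, (⟪u, EuclideanSpace.single i 1⟫ : ℝ) * G (EuclideanSpace.single i 1) = G u := by
  conv_rhs => rw [← decomp u]
  rw [map_sum]
  simp only [map_smul, smul_eq_mul]

lemma sum_inner_sq (u : EuclideanSpace ℝ (Fin N)) :
    ∑ i, (⟪u, EuclideanSpace.single i 1⟫ : ℝ)^2 = ⟪u, u⟫ := by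
  have h := sum_inner_apply u (innerSL ℝ u)
  simp only [innerSL_apply_apply] at h
  rw [← h]
  congr 1
  funext i
  rw [pow_two]

lemma sum_inner_single :
    ∑ i : Fin N, (⟪(EuclideanSpace.single i 1 : EuclideanSpace ℝ (Fin N)),
      EuclideanSpace.single i 1⟫ : ℝ) = N := by
  simp [inner_single, EuclideanSpace.single_apply]

lemma sum_inner_H_left (u : EuclideanSpace ℝ (Fin N))
    (H : EuclideanSpace ℝ (Fin N) →L[ℝ] (EuclideanSpace ℝ (Fin N) →L[ℝ] ℝ)) :
    ∑ i, (⟪u, EuclideanSpace.single i 1⟫ : ℝ) * (H (EuclideanSpace.single i 1)) u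
      = (H u) u := by
  have h := sum_inner_apply u (H.flip u)
  simpa only [ContinuousLinearMap.flip_apply] using h

lemma sum_fderiv_Kd (a : EuclideanSpace ℝ (Fin N)) (R2 α : ℝ)
    (Ψ : EuclideanSpace ℝ (Fin N) → ℝ) {x : EuclideanSpace ℝ (Fin N)} (hx : x ≠ a)
    (hΨd : DifferentiableAt ℝ Ψ (Inv a R2 x))
    (hm : DifferentiableAt ℝ (fderiv ℝ Ψ) (Inv a R2 x))
    (hα : α = (2 - (N:ℝ))/2) :
    ∑ i, fderiv ℝ (fun x' => Kd a R2 α Ψ x' (EuclideanSpace.single i 1)) x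
        (EuclideanSpace.single i 1)
      = q a x ^ α * (R2 / q a x)^2 *
        ∑ i, (fderiv ℝ (fderiv ℝ Ψ) (Inv a R2 x) (EuclideanSpace.single i 1))
          (EuclideanSpace.single i 1) := by
  have hQ0 : q a x ≠ 0 := ne_of_gt (q_pos hx)
  have key : ∀ i : Fin N,
      fderiv ℝ (fun x' => Kd a R2 α Ψ x' (EuclideanSpace.single i 1)) x
          (EuclideanSpace.single i 1) =
      (Ψ (Inv a R2 x) * (4*α*(α-1)*(q a x ^ α)/(q a x)^2)
        - 8*α*(q a x ^ α)*R2/(q a x)^3 * (fderiv ℝ Ψ (Inv a R2 x)) (x - a)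
        + 4*(q a x ^ α)*R2^2/(q a x)^4 * (fderiv ℝ (fderiv ℝ Ψ) (Inv a R2 x) (x - a)) (x - a)
        + 8*(q a x ^ α)*R2/(q a x)^3 * (fderiv ℝ Ψ (Inv a R2 x)) (x - a))
          * ⟪x - a, EuclideanSpace.single i 1⟫^2
      + (Ψ (Inv a R2 x) * (2*α*(q a x ^ α)/(q a x))
        - 2*(q a x ^ α)*R2/(q a x)^2 * (fderiv ℝ Ψ (Inv a R2 x)) (x - a))
          * (⟪(EuclideanSpace.single i 1 : EuclideanSpace ℝ (Fin N)),
              EuclideanSpace.single i 1⟫ : ℝ)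
      + (4*α*(q a x ^ α)*R2/(q a x)^2 - 4*(q a x ^ α)*R2/(q a x)^2)
          * (⟪x - a, EuclideanSpace.single i 1⟫
              * (fderiv ℝ Ψ (Inv a R2 x)) (EuclideanSpace.single i 1))
      + ((q a x ^ α)*R2^2/(q a x)^2)
          * ((fderiv ℝ (fderiv ℝ Ψ) (Inv a R2 x) (EuclideanSpace.single i 1))
              (EuclideanSpace.single i 1))
      + (-(2*(q a x ^ α)*R2^2/(q a x)^3))
          * (⟪x - a, EuclideanSpace.single i 1⟫
              * (fderiv ℝ (fderiv ℝ Ψ) (Inv a R2 x) (EuclideanSpace.single i 1)) (x - a))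
      + (-(2*(q a x ^ α)*R2^2/(q a x)^3))
          * (⟪x - a, EuclideanSpace.single i 1⟫
              * (fderiv ℝ (fderiv ℝ Ψ) (Inv a R2 x) (x - a)) (EuclideanSpace.single i 1)) := by
    intro i
    rw [fderiv_Kd_apply a R2 α Ψ hx hΨd hm]
    generalize (⟪x - a, EuclideanSpace.single i 1⟫ : ℝ) = ip
    generalize (⟪(EuclideanSpace.single i 1 : EuclideanSpace ℝ (Fin N)),
      EuclideanSpace.single i 1⟫ : ℝ) = vv
    generalize (fderiv ℝ Ψ (Inv a R2 x)) (EuclideanSpace.single i 1) = Gv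
    generalize (fderiv ℝ Ψ (Inv a R2 x)) (x - a) = Gu
    generalize (fderiv ℝ (fderiv ℝ Ψ) (Inv a R2 x) (EuclideanSpace.single i 1))
      (EuclideanSpace.single i 1) = Hvv
    generalize (fderiv ℝ (fderiv ℝ Ψ) (Inv a R2 x) (EuclideanSpace.single i 1)) (x - a) = Hvu
    generalize (fderiv ℝ (fderiv ℝ Ψ) (Inv a R2 x) (x - a)) (EuclideanSpace.single i 1) = Huv
    generalize (fderiv ℝ (fderiv ℝ Ψ) (Inv a R2 x) (x - a)) (x - a) = Huu
    generalize Ψ (Inv a R2 x) = P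
    generalize q a x ^ α = A
    generalize hQg : q a x = Q
    rw [hQg] at hQ0
    field_simp
    ring
  have hsum := Finset.sum_congr rfl (fun i (_ : i ∈ Finset.univ) => key i)
  rw [hsum]
  simp only [Finset.sum_add_distrib, ← Finset.mul_sum]
  rw [sum_inner_sq, sum_inner_single,
    sum_inner_apply (x - a) (fderiv ℝ Ψ (Inv a R2 x)),
    sum_inner_H_left (x - a) (fderiv ℝ (fderiv ℝ Ψ) (Inv a R2 x)),
    sum_inner_apply (x - a) (fderiv ℝ (fderiv ℝ Ψ) (Inv a R2 x) (x - a))]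
  have hq' : (⟪x - a, x - a⟫ : ℝ) = q a x := rfl
  rw [hq']
  subst hα
  generalize (fderiv ℝ Ψ (Inv a R2 x)) (x - a) = Gu
  generalize (fderiv ℝ (fderiv ℝ Ψ) (Inv a R2 x) (x - a)) (x - a) = Huu
  generalize Ψ (Inv a R2 x) = P
  generalize (∑ i, (fderiv ℝ (fderiv ℝ Ψ) (Inv a R2 x) (EuclideanSpace.single i 1))
      (EuclideanSpace.single i 1)) = T
  generalize q a x ^ ((2 - (N:ℝ))/2) = A
  generalize hQg : q a x = Q
  rw [hQg] at hQ0
  field_simp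
  ring

end FisheyeAux

/-- The Laplacian of a real-valued function on `EuclideanSpace ℝ (Fin N)`:
the sum of the second partial derivatives, i.e. the trace of the second
Fréchet derivative. -/
noncomputable def laplacian {N : ℕ} (f : EuclideanSpace ℝ (Fin N) → ℝ)
    (x : EuclideanSpace ℝ (Fin N)) : ℝ :=
  ∑ i : Fin N,
    iteratedFDeriv ℝ 2 f x ![EuclideanSpace.single i 1, EuclideanSpace.single i 1]

theorem fisheye_equation_inversion_invariance
    {N : ℕ} (hN : 2 ≤ N) (n₀ k ρ : ℝ) (hρ : 0 < ρ)
    (a : EuclideanSpace ℝ (Fin N))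
    (V : Set (EuclideanSpace ℝ (Fin N))) (hV : IsOpen V)
    (Ψ : EuclideanSpace ℝ (Fin N) → ℝ) (hΨ : ContDiffOn ℝ 2 Ψ V)
    (hwave : ∀ y ∈ V,
      laplacian Ψ y + (4 * n₀ ^ 2 * k ^ 2 * ρ ^ 4 / (‖y‖ ^ 2 + ρ ^ 2) ^ 2) * Ψ y = 0)
    (Ia : EuclideanSpace ℝ (Fin N) → EuclideanSpace ℝ (Fin N))
    (hIa : Ia = fun r => ((ρ ^ 2 + ‖a‖ ^ 2) / ‖r - a‖ ^ 2) • (r - a) + a)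
    (Φ : EuclideanSpace ℝ (Fin N) → ℝ)
    (hΦ : Φ = fun r => ‖r - a‖ ^ (-((N : ℝ) - 2)) * Ψ (Ia r)) :
    ∀ r : EuclideanSpace ℝ (Fin N), r ≠ a → Ia r ∈ V →
      laplacian Φ r + (4 * n₀ ^ 2 * k ^ 2 * ρ ^ 4 / (‖r‖ ^ 2 + ρ ^ 2) ^ 2) * Φ r = 0 := by
  intro r hra hrV
  classical
  open FisheyeAux in
  set R2 : ℝ := ρ ^ 2 + ‖a‖ ^ 2 with hR2def
  set α : ℝ := (2 - (N : ℝ)) / 2 with hαdef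
  -- identification of the inversion map
  have hIa' : Ia = FisheyeAux.Inv a R2 := by
    funext z
    rw [hIa]
    show _ = (R2 / FisheyeAux.q a z) • (z - a) + a
    rw [FisheyeAux.q_eq]
  -- identification of Φ
  have hnorm : ∀ z : EuclideanSpace ℝ (Fin N),
      ‖z - a‖ ^ (-((N : ℝ) - 2)) = FisheyeAux.q a z ^ α := by
    intro z
    rw [FisheyeAux.q_eq, ← Real.rpow_natCast ‖z - a‖ 2, ← Real.rpow_mul (norm_nonneg _)]
    congr 1
    push_cast
    ring
  have hΦ' : Φ = fun z => FisheyeAux.q a z ^ α * Ψ (FisheyeAux.Inv a R2 z) := by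
    funext z
    rw [hΦ, hIa']
    show ‖z - a‖ ^ (-((N : ℝ) - 2)) * Ψ (FisheyeAux.Inv a R2 z) = _
    rw [hnorm]
  rw [hIa'] at hrV
  -- the open set on which everything is smooth
  have hcont : ContinuousOn (FisheyeAux.Inv a R2) {z : EuclideanSpace ℝ (Fin N) | z ≠ a} :=
    fun z hz => (FisheyeAux.hasFDerivAt_Inv a R2 hz).continuousAt.continuousWithinAt
  have hUopen : IsOpen ({z : EuclideanSpace ℝ (Fin N) | z ≠ a}
      ∩ (FisheyeAux.Inv a R2) ⁻¹' V) :=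
    hcont.isOpen_inter_preimage isOpen_ne hV
  have hrU : r ∈ ({z : EuclideanSpace ℝ (Fin N) | z ≠ a}
      ∩ (FisheyeAux.Inv a R2) ⁻¹' V) := ⟨hra, hrV⟩
  -- first derivative on the open set
  have hK : ∀ z ∈ ({z : EuclideanSpace ℝ (Fin N) | z ≠ a}
      ∩ (FisheyeAux.Inv a R2) ⁻¹' V),
      HasFDerivAt Φ (FisheyeAux.Kd a R2 α Ψ z) z := by
    intro z hz
    have hd1 : DifferentiableAt ℝ Ψ (FisheyeAux.Inv a R2 z) :=
      (hΨ.contDiffAt (hV.mem_nhds hz.2)).differentiableAt (by norm_num)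
    rw [hΦ']
    exact FisheyeAux.hasFDerivAt_K a R2 α Ψ hz.1 hd1
  have hEv : ∀ᶠ z in nhds r, fderiv ℝ Φ z = FisheyeAux.Kd a R2 α Ψ z := by
    filter_upwards [hUopen.mem_nhds hrU] with z hz
    exact (hK z hz).fderiv
  -- smoothness of Φ at r
  have hQne : FisheyeAux.q a r ≠ 0 := ne_of_gt (FisheyeAux.q_pos hra)
  have hqCD : ContDiffAt ℝ 2 (FisheyeAux.q a) r :=
    ((FisheyeAux.contDiff_q a).of_le le_top).contDiffAt
  have hrpowCD : ContDiffAt ℝ 2 (fun z => FisheyeAux.q a z ^ α) r :=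
    (Real.contDiffAt_rpow_const_of_ne hQne).comp r hqCD
  have hInvCD : ContDiffAt ℝ 2 (FisheyeAux.Inv a R2) r := by
    unfold FisheyeAux.Inv
    exact ((contDiffAt_const.div hqCD hQne).smul
      (contDiffAt_id.sub contDiffAt_const)).add contDiffAt_const
  have hΨCD : ContDiffAt ℝ 2 Ψ (FisheyeAux.Inv a R2 r) := hΨ.contDiffAt (hV.mem_nhds hrV)
  have hΦCD : ContDiffAt ℝ 2 Φ r := by
    rw [hΦ']
    exact hrpowCD.mul (hΨCD.comp r hInvCD)
  have hdfΦ : DifferentiableAt ℝ (fderiv ℝ Φ) r :=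
    (hΦCD.fderiv_right (m := 1) (by norm_num)).differentiableAt (by norm_num)
  have hΨd : DifferentiableAt ℝ Ψ (FisheyeAux.Inv a R2 r) :=
    hΨCD.differentiableAt (by norm_num)
  have hmy : DifferentiableAt ℝ (fderiv ℝ Ψ) (FisheyeAux.Inv a R2 r) :=
    (hΨCD.fderiv_right (m := 1) (by norm_num)).differentiableAt (by norm_num)
  -- the Laplacian of Φ at r
  have hLap : laplacian Φ r = FisheyeAux.q a r ^ α * (R2 / FisheyeAux.q a r) ^ 2 *
      ∑ i, (fderiv ℝ (fderiv ℝ Ψ) (FisheyeAux.Inv a R2 r) (EuclideanSpace.single i 1))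
        (EuclideanSpace.single i 1) := by
    rw [← FisheyeAux.sum_fderiv_Kd a R2 α Ψ hra hΨd hmy hαdef]
    unfold laplacian
    refine Finset.sum_congr rfl fun i _ => ?_
    have e1 : fderiv ℝ (fun z => fderiv ℝ Φ z (EuclideanSpace.single i 1)) r
        (EuclideanSpace.single i 1)
        = fderiv ℝ (fderiv ℝ Φ) r (EuclideanSpace.single i 1) (EuclideanSpace.single i 1) := by
      rw [fderiv_clm_apply hdfΦ (differentiableAt_const _)]
      simp
    have hfe' : (fun z => fderiv ℝ Φ z (EuclideanSpace.single i 1)) =ᶠ[nhds r]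
        (fun z => FisheyeAux.Kd a R2 α Ψ z (EuclideanSpace.single i 1)) := by
      filter_upwards [hEv] with z hz
      rw [hz]
    have hfe : fderiv ℝ (fun z => fderiv ℝ Φ z (EuclideanSpace.single i 1)) r
        = fderiv ℝ (fun z => FisheyeAux.Kd a R2 α Ψ z (EuclideanSpace.single i 1)) r :=
      Filter.EventuallyEq.fderiv_eq hfe'
    rw [iteratedFDeriv_two_apply]
    simp only [Matrix.cons_val_zero, Matrix.cons_val_one, Matrix.head_cons]
    rw [← e1, hfe]
  -- the Laplacian of Ψ at the inverted point
  have hLapΨ : laplacian Ψ (FisheyeAux.Inv a R2 r)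
      = ∑ i, (fderiv ℝ (fderiv ℝ Ψ) (FisheyeAux.Inv a R2 r) (EuclideanSpace.single i 1))
        (EuclideanSpace.single i 1) := by
    unfold laplacian
    refine Finset.sum_congr rfl fun i _ => ?_
    rw [iteratedFDeriv_two_apply]
    simp only [Matrix.cons_val_zero, Matrix.cons_val_one, Matrix.head_cons]
  -- the wave equation at the inverted point
  have hw := hwave (FisheyeAux.Inv a R2 r) hrV
  rw [hLapΨ] at hw
  -- geometric identity
  have hQr : ‖r‖ ^ 2 = FisheyeAux.q a r + 2 * ⟪r - a, a⟫ + ‖a‖ ^ 2 := by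
    conv_lhs => rw [show r = (r - a) + a by abel]
    rw [norm_add_sq_real, FisheyeAux.q_eq]
  have hQy : ‖FisheyeAux.Inv a R2 r‖ ^ 2
      = (R2 / FisheyeAux.q a r) ^ 2 * FisheyeAux.q a r
        + 2 * ((R2 / FisheyeAux.q a r) * ⟪r - a, a⟫) + ‖a‖ ^ 2 := by
    show ‖(R2 / FisheyeAux.q a r) • (r - a) + a‖ ^ 2 = _
    rw [norm_add_sq_real, norm_smul, real_inner_smul_left, mul_pow, Real.norm_eq_abs,
      sq_abs, ← FisheyeAux.q_eq]
  have hkey : (‖FisheyeAux.Inv a R2 r‖ ^ 2 + ρ ^ 2) * FisheyeAux.q a r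
      = R2 * (‖r‖ ^ 2 + ρ ^ 2) := by
    rw [hQy, hQr, hR2def]
    field_simp
    ring
  have hR2pos : (0:ℝ) < R2 := by
    rw [hR2def]
    have h1 : (0:ℝ) < ρ ^ 2 := pow_pos hρ 2
    have h2 : (0:ℝ) ≤ ‖a‖ ^ 2 := sq_nonneg _
    linarith
  have hypos : (0:ℝ) < ‖FisheyeAux.Inv a R2 r‖ ^ 2 + ρ ^ 2 := by
    have h1 : (0:ℝ) < ρ ^ 2 := pow_pos hρ 2
    have h2 : (0:ℝ) ≤ ‖FisheyeAux.Inv a R2 r‖ ^ 2 := sq_nonneg _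
    linarith
  have hrpos : (0:ℝ) < ‖r‖ ^ 2 + ρ ^ 2 := by
    have h1 : (0:ℝ) < ρ ^ 2 := pow_pos hρ 2
    have h2 : (0:ℝ) ≤ ‖r‖ ^ 2 := sq_nonneg _
    linarith
  have hWW : (R2 / FisheyeAux.q a r) ^ 2
        * (4 * n₀ ^ 2 * k ^ 2 * ρ ^ 4 / (‖FisheyeAux.Inv a R2 r‖ ^ 2 + ρ ^ 2) ^ 2)
      = 4 * n₀ ^ 2 * k ^ 2 * ρ ^ 4 / (‖r‖ ^ 2 + ρ ^ 2) ^ 2 := by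
    have hy2 : ‖FisheyeAux.Inv a R2 r‖ ^ 2 + ρ ^ 2
        = R2 * (‖r‖ ^ 2 + ρ ^ 2) / FisheyeAux.q a r := by
      rw [eq_div_iff hQne]
      exact hkey
    rw [hy2]
    have hR2ne : R2 ≠ 0 := ne_of_gt hR2pos
    have hrne : ‖r‖ ^ 2 + ρ ^ 2 ≠ 0 := ne_of_gt hrpos
    field_simp
  -- conclusion
  rw [hLap, hΦ']
  have hT : ∑ i, (fderiv ℝ (fderiv ℝ Ψ) (FisheyeAux.Inv a R2 r) (EuclideanSpace.single i 1))
        (EuclideanSpace.single i 1)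
      = -(4 * n₀ ^ 2 * k ^ 2 * ρ ^ 4 / (‖FisheyeAux.Inv a R2 r‖ ^ 2 + ρ ^ 2) ^ 2
          * Ψ (FisheyeAux.Inv a R2 r)) := by linarith
  rw [hT]
  simp only
  linear_combination (-(FisheyeAux.q a r ^ α * Ψ (FisheyeAux.Inv a R2 r))) * hWW
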